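/- Let S be a subsquare of the Cayley table of a group G of order n. Then there exists a subgroup H of G and elements x, y ∈ G such that S is the submatrix with rows indexed by the left coset xH and columns indexed by the right coset Hy. In particular, the order of S divides n. -/
import Mathlib


open Pointwise

theorem stmt5 {G : Type*} [Group G] [Fintype G] [DecidableEq G]
    (R C : Finset G) (hne : R.Nonempty) (hcard : R.card = C.card)
    (hsq : ((R ×ˢ C).image (fun p => p.1 * p.2)).card = R.card) :
    ∃ (H : Subgroup G) (x y : G),
      (R : Set G) = x • (H : Set G) ∧
      (C : Set G) = (H : Set G) * {y} ∧
      R.card = Nat.card H ∧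
      R.card ∣ Fintype.card G := by
  classical
  obtain ⟨r0, hr0⟩ := hne
  have hCne : C.Nonempty := Finset.card_pos.mp (hcard ▸ Finset.card_pos.mpr ⟨r0, hr0⟩)
  obtain ⟨c0, hc0⟩ := hCne
  -- Step 1: for each r ∈ R, r • C is the whole product set
  have hP : ∀ r ∈ R, r • C = (R ×ˢ C).image (fun p => p.1 * p.2) := by
    intro r hr
    apply Finset.eq_of_subset_of_card_le
    · intro x hx
      obtain ⟨c, hc, rfl⟩ := Finset.mem_smul_finset.mp hx
      exact Finset.mem_image.mpr ⟨(r, c), Finset.mem_product.mpr ⟨hr, hc⟩, rfl⟩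
    · rw [hsq, Finset.card_smul_finset, hcard]
  have hstab : ∀ r ∈ R, ∀ r' ∈ R, (r⁻¹ * r') • C = C := by
    intro r hr r' hr'
    rw [mul_smul, hP r' hr', ← hP r hr, inv_smul_smul]
  set H := MulAction.stabilizer G C with hH
  have hmem : ∀ r ∈ R, r0⁻¹ * r ∈ H := fun r hr => hstab r0 hr0 r hr
  have hHC : ∀ g ∈ H, g * c0 ∈ C := by
    intro g hg
    have : g • C = C := hg
    rw [← this]
    exact Finset.smul_mem_smul_finset hc0
  -- the finset corresponding to H
  set HF : Finset G := Set.toFinset (H : Set G) with hHF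
  have hHFcard : HF.card = Nat.card H := by
    rw [hHF, Set.toFinset_card, Nat.card_eq_fintype_card]
    exact (Fintype.card_congr (Equiv.refl _))
  -- H * {c0} ⊆ C, giving |H| ≤ |C| = |R|
  have hsub2 : HF * {c0} ⊆ C := by
    intro x hx
    obtain ⟨a, ha, b, hb, rfl⟩ := Finset.mem_mul.mp hx
    rw [Finset.mem_singleton] at hb
    subst hb
    exact hHC a (by simpa [hHF, Set.mem_toFinset] using ha)
  have hcardHC : (HF * {c0}).card = HF.card := Finset.card_mul_singleton _ _
  have hHle : HF.card ≤ R.card := by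
    rw [hcard, ← hcardHC]
    exact Finset.card_le_card hsub2
  -- r0⁻¹ • R ⊆ HF with |r0⁻¹ • R| = |R| ≥ |HF|, so equality
  have hsub1 : r0⁻¹ • R ⊆ HF := by
    intro g hg
    obtain ⟨r, hr, rfl⟩ := Finset.mem_smul_finset.mp hg
    simpa [hHF, Set.mem_toFinset] using hmem r hr
  have e1 : r0⁻¹ • R = HF := by
    apply Finset.eq_of_subset_of_card_le hsub1
    rwa [Finset.card_smul_finset]
  have hcardeq : R.card = Nat.card H := by
    rw [← hHFcard, ← e1, Finset.card_smul_finset]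
  have e2 : C = HF * {c0} := by
    apply (Finset.eq_of_subset_of_card_le hsub2 ?_).symm
    rw [hcardHC, ← e1, Finset.card_smul_finset, ← hcard]
  refine ⟨H, r0, c0, ?_, ?_, hcardeq, ?_⟩
  · have : ((r0⁻¹ • R : Finset G) : Set G) = (H : Set G) := by
      rw [e1, hHF, Set.coe_toFinset]
    rw [Finset.coe_smul_finset] at this
    rw [← this, smul_inv_smul]
  · have := congrArg (fun s : Finset G => (s : Set G)) e2
    simpa [hHF, Set.coe_toFinset] using this
  · rw [hcardeq, ← Nat.card_eq_fintype_card]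
    exact Subgroup.card_subgroup_dvd_card H
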